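/- Let x, t, y, z₁, z₂ be random variables with finite ranges on a probability space, with joint distribution p(x,t,y). Assume z₁ is a representation of (x,t), i.e. the conditional mutual information I(z₁; y | x,t) = 0, and z₁ is a sufficient representation of x with side-channel information t for y, i.e. I((x,t); y | z₁) = 0. Assume z₂ is a representation of x, i.e. I(z₂; y | x) = 0, and z₂ is a sufficient representation of x for y, i.e. I(x; y | z₂) = 0. Then the mutual information between z₁ and y is at least that between z₂ and y: I(z₁; y) ≥ I(z₂; y). -/

import Mathlib

open MeasureTheory ProbabilityTheory

/-- Shannon entropy of a finite-valued random variable `X` under measure `μ`. -/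
noncomputable def entropy {Ω : Type*} [MeasurableSpace Ω] {α : Type*} [Fintype α]
    [MeasurableSpace α] (μ : Measure Ω) (X : Ω → α) : ℝ :=
  - ∑ a : α, (μ (X ⁻¹' {a})).toReal * Real.log (μ (X ⁻¹' {a})).toReal

/-- Conditional entropy `H(X | Y) = H(X, Y) - H(Y)`. -/
noncomputable def condEntropy {Ω : Type*} [MeasurableSpace Ω] {α β : Type*}
    [Fintype α] [MeasurableSpace α] [Fintype β] [MeasurableSpace β]
    (μ : Measure Ω) (X : Ω → α) (Y : Ω → β) : ℝ :=
  entropy μ (fun ω => (X ω, Y ω)) - entropy μ Y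

/-- Mutual information `I(X; Y) = H(X) - H(X | Y)`. -/
noncomputable def mutualInfo {Ω : Type*} [MeasurableSpace Ω] {α β : Type*}
    [Fintype α] [MeasurableSpace α] [Fintype β] [MeasurableSpace β]
    (μ : Measure Ω) (X : Ω → α) (Y : Ω → β) : ℝ :=
  entropy μ X - condEntropy μ X Y

/-- Conditional mutual information `I(X; Y | W) = H(X | W) - H(X | (Y, W))`. -/
noncomputable def condMutualInfo {Ω : Type*} [MeasurableSpace Ω] {α β γ : Type*}
    [Fintype α] [MeasurableSpace α] [Fintype β] [MeasurableSpace β]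
    [Fintype γ] [MeasurableSpace γ]
    (μ : Measure Ω) (X : Ω → α) (Y : Ω → β) (W : Ω → γ) : ℝ :=
  condEntropy μ X W - condEntropy μ X (fun ω => (Y ω, W ω))

lemma aux_gibbs {ι : Type*} [Fintype ι] (p q : ι → ℝ)
    (hp : ∀ i, 0 ≤ p i) (hq : ∀ i, 0 ≤ q i) (hqp : ∀ i, q i = 0 → p i = 0)
    (h : ∑ i, q i ≤ ∑ i, p i) :
    ∑ i, p i * Real.log (q i) ≤ ∑ i, p i * Real.log (p i) := by
  have key : ∀ i, p i * Real.log (q i) - p i * Real.log (p i) ≤ q i - p i := by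
    intro i
    rcases eq_or_lt_of_le (hp i) with h0 | h0
    · rw [← h0]; simpa using hq i
    · have hqi : 0 < q i :=
        (hq i).lt_of_ne (fun h' => absurd (hqp i h'.symm) (ne_of_gt h0))
      have hl := Real.log_le_sub_one_of_pos (show 0 < q i / p i from div_pos hqi h0)
      rw [Real.log_div (ne_of_gt hqi) (ne_of_gt h0)] at hl
      have := mul_le_mul_of_nonneg_left hl (le_of_lt h0)
      rw [mul_sub] at this
      have hd : p i * (q i / p i - 1) = q i - p i := by field_simp
      nlinarith [this]
  have hs := Finset.sum_le_sum (fun i (_ : i ∈ Finset.univ) => key i)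
  rw [Finset.sum_sub_distrib, Finset.sum_sub_distrib] at hs
  linarith

lemma aux_ssa {A B G : Type*} [Fintype A] [Fintype B] [Fintype G]
    (p : A → B → G → ℝ) (hp : ∀ a b c, 0 ≤ p a b c) :
    (∑ a, ∑ c, ((∑ b, p a b c) * Real.log (∑ b, p a b c))) +
      ∑ b, ∑ c, ((∑ a, p a b c) * Real.log (∑ a, p a b c)) ≤
    (∑ a, ∑ b, ∑ c, p a b c * Real.log (p a b c)) +
      ∑ c, ((∑ a, ∑ b, p a b c) * Real.log (∑ a, ∑ b, p a b c)) := by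
  classical
  set pxw : A → G → ℝ := fun a c => ∑ b, p a b c with hpxw
  set pyw : B → G → ℝ := fun b c => ∑ a, p a b c with hpyw
  set pw : G → ℝ := fun c => ∑ a, ∑ b, p a b c with hpw
  have hpxw_nn : ∀ a c, 0 ≤ pxw a c := fun a c => Finset.sum_nonneg fun b _ => hp a b c
  have hpyw_nn : ∀ b c, 0 ≤ pyw b c := fun b c => Finset.sum_nonneg fun a _ => hp a b c
  have hpw_nn : ∀ c, 0 ≤ pw c := fun c => Finset.sum_nonneg fun a _ => hpxw_nn a c
  have hxw_le_w : ∀ a c, pxw a c ≤ pw c := fun a c =>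
    Finset.single_le_sum (fun a' _ => hpxw_nn a' c) (Finset.mem_univ a)
  have hp_le_xw : ∀ a b c, p a b c ≤ pxw a c := fun a b c =>
    Finset.single_le_sum (fun b' _ => hp a b' c) (Finset.mem_univ b)
  have hp_le_yw : ∀ a b c, p a b c ≤ pyw b c := fun a b c =>
    Finset.single_le_sum (fun a' _ => hp a' b c) (Finset.mem_univ a)
  have hw_eq : ∀ c, pw c = ∑ b, pyw b c := fun c => Finset.sum_comm
  have rearr : ∀ f : A → B → G → ℝ,
      (∑ a, ∑ b, ∑ c, f a b c) = ∑ c, ∑ a, ∑ b, f a b c := by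
    intro f
    calc (∑ a, ∑ b, ∑ c, f a b c) = ∑ a, ∑ c, ∑ b, f a b c :=
          Finset.sum_congr rfl fun a _ => Finset.sum_comm
      _ = ∑ c, ∑ a, ∑ b, f a b c := Finset.sum_comm
  have rearr2 : ∀ f : A → B → G → ℝ,
      (∑ a, ∑ b, ∑ c, f a b c) = ∑ b, ∑ c, ∑ a, f a b c := by
    intro f
    calc (∑ a, ∑ b, ∑ c, f a b c) = ∑ b, ∑ a, ∑ c, f a b c := Finset.sum_comm
      _ = ∑ b, ∑ c, ∑ a, f a b c := Finset.sum_congr rfl fun b _ => Finset.sum_comm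
  set P : A × B × G → ℝ := fun s => p s.1 s.2.1 s.2.2 with hP
  set Q : A × B × G → ℝ := fun s => pxw s.1 s.2.2 * pyw s.2.1 s.2.2 / pw s.2.2 with hQ
  have hPnn : ∀ s, 0 ≤ P s := fun s => hp _ _ _
  have hQnn : ∀ s, 0 ≤ Q s := fun s =>
    div_nonneg (mul_nonneg (hpxw_nn _ _) (hpyw_nn _ _)) (hpw_nn _)
  have hpos : ∀ s, 0 < P s → 0 < pxw s.1 s.2.2 ∧ 0 < pyw s.2.1 s.2.2 ∧ 0 < pw s.2.2 := by
    intro s hp0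
    refine ⟨lt_of_lt_of_le hp0 (hp_le_xw _ _ _), lt_of_lt_of_le hp0 (hp_le_yw _ _ _), ?_⟩
    exact lt_of_lt_of_le (lt_of_lt_of_le hp0 (hp_le_xw _ _ _)) (hxw_le_w _ _)
  have hQP : ∀ s, Q s = 0 → P s = 0 := by
    intro s hs
    by_contra hps
    have hp0 : 0 < P s := (hPnn s).lt_of_ne (Ne.symm hps)
    obtain ⟨h1, h2, h3⟩ := hpos s hp0
    exact absurd hs (ne_of_gt (div_pos (mul_pos h1 h2) h3))
  have hsumQ : ∑ s, Q s ≤ ∑ s, P s := by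
    simp only [Fintype.sum_prod_type]
    rw [rearr (fun a b c => Q (a, (b, c))), rearr (fun a b c => P (a, (b, c)))]
    apply Finset.sum_le_sum
    intro c _
    rcases eq_or_lt_of_le (hpw_nn c) with h0 | h0
    · have hz : ∀ a b, Q (a, (b, c)) = 0 := by
        intro a b
        have : pxw a c = 0 :=
          le_antisymm (h0 ▸ hxw_le_w a c) (hpxw_nn a c)
        simp [hQ, this]
      simp only [hz, Finset.sum_const_zero]
      exact Finset.sum_nonneg fun a _ => Finset.sum_nonneg fun b _ => hPnn (a, (b, c))
    · have hc : pw c ≠ 0 := ne_of_gt h0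
      have hrow : ∀ a, (∑ b, Q (a, (b, c))) = pxw a c := by
        intro a
        have h1 : (∑ b, Q (a, (b, c))) = pxw a c * (∑ b, pyw b c) / pw c := by
          simp only [hQ]
          rw [Finset.mul_sum, Finset.sum_div]
        rw [h1, ← hw_eq c, mul_div_assoc, div_self hc, mul_one]
      refine le_of_eq ?_
      exact Finset.sum_congr rfl fun a _ => hrow a
  have hgibbs := aux_gibbs P Q hPnn hQnn hQP hsumQ
  have hsplit : ∀ s, P s * Real.log (Q s) =
      P s * Real.log (pxw s.1 s.2.2) + P s * Real.log (pyw s.2.1 s.2.2)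
        - P s * Real.log (pw s.2.2) := by
    intro s
    rcases eq_or_lt_of_le (hPnn s) with h0 | h0
    · rw [← h0]; ring
    · obtain ⟨h1, h2, h3⟩ := hpos s h0
      rw [hQ, Real.log_div (ne_of_gt (mul_pos h1 h2)) (ne_of_gt h3),
        Real.log_mul (ne_of_gt h1) (ne_of_gt h2)]
      ring
  have hPQ : (∑ s, P s * Real.log (Q s)) =
      (∑ s, P s * Real.log (pxw s.1 s.2.2)) + (∑ s, P s * Real.log (pyw s.2.1 s.2.2))
        - ∑ s, P s * Real.log (pw s.2.2) := by
    rw [← Finset.sum_add_distrib, ← Finset.sum_sub_distrib]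
    exact Finset.sum_congr rfl fun s _ => hsplit s
  have hm1 : (∑ s, P s * Real.log (pxw s.1 s.2.2)) =
      ∑ a, ∑ c, pxw a c * Real.log (pxw a c) := by
    simp only [Fintype.sum_prod_type]
    refine Finset.sum_congr rfl fun a _ => ?_
    rw [Finset.sum_comm]
    refine Finset.sum_congr rfl fun c _ => ?_
    rw [← Finset.sum_mul]
  have hm2 : (∑ s, P s * Real.log (pyw s.2.1 s.2.2)) =
      ∑ b, ∑ c, pyw b c * Real.log (pyw b c) := by
    simp only [Fintype.sum_prod_type]
    rw [rearr2 (fun a b c => P (a, (b, c)) * Real.log (pyw b c))]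
    refine Finset.sum_congr rfl fun b _ => Finset.sum_congr rfl fun c _ => ?_
    rw [← Finset.sum_mul]
  have hm3 : (∑ s, P s * Real.log (pw s.2.2)) = ∑ c, pw c * Real.log (pw c) := by
    simp only [Fintype.sum_prod_type]
    rw [rearr (fun a b c => P (a, (b, c)) * Real.log (pw c))]
    refine Finset.sum_congr rfl fun c _ => ?_
    calc (∑ a, ∑ b, P (a, (b, c)) * Real.log (pw c))
        = ∑ a, (∑ b, p a b c) * Real.log (pw c) :=
          Finset.sum_congr rfl fun a _ => (Finset.sum_mul _ _ _).symm
      _ = (∑ a, ∑ b, p a b c) * Real.log (pw c) := (Finset.sum_mul _ _ _).symm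
      _ = pw c * Real.log (pw c) := rfl
  have hm4 : (∑ s, P s * Real.log (P s)) =
      ∑ a, ∑ b, ∑ c, p a b c * Real.log (p a b c) := by
    simp only [Fintype.sum_prod_type]
    rfl
  rw [hPQ, hm1, hm2, hm3, hm4] at hgibbs
  linarith

lemma aux_meas_decomp {Ω β : Type*} [MeasurableSpace Ω] (μ : Measure Ω) [IsFiniteMeasure μ]
    [Fintype β] [MeasurableSpace β] [MeasurableSingletonClass β]
    (g : Ω → β) (hg : Measurable g) (U : Set Ω) (hU : MeasurableSet U) :
    (μ U).toReal = ∑ b, (μ (U ∩ g ⁻¹' {b})).toReal := by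
  have hdec : U = ⋃ b, U ∩ g ⁻¹' {b} := by ext ω; simp
  have hdisj : Pairwise (Function.onFun Disjoint fun b => U ∩ g ⁻¹' {b}) := by
    intro b b' hbb'
    refine Set.disjoint_left.mpr ?_
    rintro ω ⟨-, h1⟩ ⟨-, h2⟩
    exact hbb' ((Set.mem_singleton_iff.mp h1).symm.trans (Set.mem_singleton_iff.mp h2))
  conv_lhs => rw [hdec]
  rw [measure_iUnion hdisj (fun b => hU.inter (hg (measurableSet_singleton b))),
    tsum_fintype, ENNReal.toReal_sum (fun b _ => measure_ne_top μ _)]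

lemma aux_entropy_comp {Ω α β : Type*} [MeasurableSpace Ω] (μ : Measure Ω)
    [Fintype α] [MeasurableSpace α] [Fintype β] [MeasurableSpace β]
    (X : Ω → α) (e : α → β) (he : Function.Injective e) :
    entropy μ (fun ω => e (X ω)) = entropy μ X := by
  classical
  unfold entropy
  congr 1
  rw [← Finset.sum_subset (Finset.subset_univ (Finset.univ.image e))
    (fun b _ hb => ?_)]
  · rw [Finset.sum_image (fun a _ a' _ h => he h)]
    refine Finset.sum_congr rfl fun a _ => ?_
    have : (fun ω => e (X ω)) ⁻¹' {e a} = X ⁻¹' {a} := by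
      ext ω; simp [he.eq_iff]
    rw [this]
  · have : (fun ω => e (X ω)) ⁻¹' {b} = ∅ := by
      ext ω
      simp only [Set.mem_preimage, Set.mem_singleton_iff, Set.mem_empty_iff_false, iff_false]
      intro h
      exact hb (Finset.mem_image.mpr ⟨X ω, Finset.mem_univ _, h⟩)
    simp [this]

lemma aux_entropy_ssa {Ω A B G : Type*} [MeasurableSpace Ω] (μ : Measure Ω)
    [IsProbabilityMeasure μ]
    [Fintype A] [MeasurableSpace A] [MeasurableSingletonClass A]
    [Fintype B] [MeasurableSpace B] [MeasurableSingletonClass B]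
    [Fintype G] [MeasurableSpace G] [MeasurableSingletonClass G]
    (X : Ω → A) (Y : Ω → B) (W : Ω → G)
    (hX : Measurable X) (hY : Measurable Y) (hW : Measurable W) :
    entropy μ (fun ω => (X ω, Y ω, W ω)) + entropy μ W ≤
      entropy μ (fun ω => (X ω, W ω)) + entropy μ (fun ω => (Y ω, W ω)) := by
  classical
  set p : A → B → G → ℝ :=
    fun a b c => (μ ((fun ω => (X ω, Y ω, W ω)) ⁻¹' {(a, b, c)})).toReal with hpdef
  have hp : ∀ a b c, 0 ≤ p a b c := fun a b c => ENNReal.toReal_nonneg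
  have htriple : entropy μ (fun ω => (X ω, Y ω, W ω)) =
      -∑ a, ∑ b, ∑ c, p a b c * Real.log (p a b c) := by
    unfold entropy
    simp only [Fintype.sum_prod_type]
    rfl
  have hm_xw : ∀ a c, (μ ((fun ω => (X ω, W ω)) ⁻¹' {(a, c)})).toReal = ∑ b, p a b c := by
    intro a c
    rw [aux_meas_decomp μ Y hY _ ((hX.prodMk hW) (measurableSet_singleton (a, c)))]
    refine Finset.sum_congr rfl fun b _ => ?_
    refine congrArg (fun s => (μ s).toReal) ?_
    ext ω
    simp only [Set.mem_inter_iff, Set.mem_preimage, Set.mem_singleton_iff, Prod.mk.injEq]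
    tauto
  have hm_yw : ∀ b c, (μ ((fun ω => (Y ω, W ω)) ⁻¹' {(b, c)})).toReal = ∑ a, p a b c := by
    intro b c
    rw [aux_meas_decomp μ X hX _ ((hY.prodMk hW) (measurableSet_singleton (b, c)))]
    refine Finset.sum_congr rfl fun a _ => ?_
    refine congrArg (fun s => (μ s).toReal) ?_
    ext ω
    simp only [Set.mem_inter_iff, Set.mem_preimage, Set.mem_singleton_iff, Prod.mk.injEq]
    tauto
  have hm_w : ∀ c, (μ (W ⁻¹' {c})).toReal = ∑ a, ∑ b, p a b c := by
    intro c
    rw [aux_meas_decomp μ X hX _ (hW (measurableSet_singleton c))]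
    refine Finset.sum_congr rfl fun a _ => ?_
    rw [aux_meas_decomp μ Y hY _ ((hW (measurableSet_singleton c)).inter
      (hX (measurableSet_singleton a)))]
    refine Finset.sum_congr rfl fun b _ => ?_
    refine congrArg (fun s => (μ s).toReal) ?_
    ext ω
    simp only [Set.mem_inter_iff, Set.mem_preimage, Set.mem_singleton_iff, Prod.mk.injEq]
    tauto
  have hXW : entropy μ (fun ω => (X ω, W ω)) =
      -∑ a, ∑ c, (∑ b, p a b c) * Real.log (∑ b, p a b c) := by
    unfold entropy
    simp only [Fintype.sum_prod_type]
    congr 1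
    exact Finset.sum_congr rfl fun a _ => Finset.sum_congr rfl fun c _ => by
      rw [hm_xw a c]
  have hYW : entropy μ (fun ω => (Y ω, W ω)) =
      -∑ b, ∑ c, (∑ a, p a b c) * Real.log (∑ a, p a b c) := by
    unfold entropy
    simp only [Fintype.sum_prod_type]
    congr 1
    exact Finset.sum_congr rfl fun b _ => Finset.sum_congr rfl fun c _ => by
      rw [hm_yw b c]
  have hWe : entropy μ W =
      -∑ c, (∑ a, ∑ b, p a b c) * Real.log (∑ a, ∑ b, p a b c) := by
    unfold entropy
    congr 1
    exact Finset.sum_congr rfl fun c _ => by rw [hm_w c]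
  have := aux_ssa p hp
  rw [htriple, hXW, hYW, hWe]
  linarith

theorem tve_z1_better
    {Ω : Type*} [MeasurableSpace Ω] (μ : Measure Ω) [IsProbabilityMeasure μ]
    {A T B C D : Type*}
    [Fintype A] [MeasurableSpace A] [MeasurableSingletonClass A]
    [Fintype T] [MeasurableSpace T] [MeasurableSingletonClass T]
    [Fintype B] [MeasurableSpace B] [MeasurableSingletonClass B]
    [Fintype C] [MeasurableSpace C] [MeasurableSingletonClass C]
    [Fintype D] [MeasurableSpace D] [MeasurableSingletonClass D]
    (x : Ω → A) (t : Ω → T) (y : Ω → B) (z₁ : Ω → C) (z₂ : Ω → D)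
    (hx : Measurable x) (ht : Measurable t) (hy : Measurable y)
    (hz₁ : Measurable z₁) (hz₂ : Measurable z₂)
    (hz₁rep : condMutualInfo μ z₁ y (fun ω => (x ω, t ω)) = 0)
    (hz₁suff : condMutualInfo μ (fun ω => (x ω, t ω)) y z₁ = 0)
    (hz₂rep : condMutualInfo μ z₂ y x = 0)
    (hz₂suff : condMutualInfo μ x y z₂ = 0) :
    mutualInfo μ z₁ y ≥ mutualInfo μ z₂ y := by
  simp only [condMutualInfo, condEntropy] at hz₁rep hz₁suff hz₂rep hz₂suff
  simp only [mutualInfo, condEntropy, ge_iff_le]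
  -- entropy rearrangement equalities
  have E1 : entropy μ (fun ω => ((x ω, t ω), z₁ ω)) =
      entropy μ (fun ω => (z₁ ω, (x ω, t ω))) :=
    aux_entropy_comp μ (fun ω => (z₁ ω, (x ω, t ω))) (fun s => (s.2, s.1))
      (fun s s' h => by simpa [Prod.ext_iff, and_comm] using h)
  have E2 : entropy μ (fun ω => ((x ω, t ω), (y ω, z₁ ω))) =
      entropy μ (fun ω => (z₁ ω, (y ω, (x ω, t ω)))) :=
    aux_entropy_comp μ (fun ω => (z₁ ω, (y ω, (x ω, t ω))))
      (fun s => ((s.2.2.1, s.2.2.2), (s.2.1, s.1)))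
      (by intro ⟨c, b, a, t⟩ ⟨c', b', a', t'⟩ h; simp_all [Prod.ext_iff])
  have E3 : entropy μ (fun ω => (x ω, z₂ ω)) = entropy μ (fun ω => (z₂ ω, x ω)) :=
    aux_entropy_comp μ (fun ω => (z₂ ω, x ω)) (fun s => (s.2, s.1))
      (fun s s' h => by simpa [Prod.ext_iff, and_comm] using h)
  have E4 : entropy μ (fun ω => (x ω, (y ω, z₂ ω))) =
      entropy μ (fun ω => (z₂ ω, (y ω, x ω))) :=
    aux_entropy_comp μ (fun ω => (z₂ ω, (y ω, x ω)))
      (fun s => (s.2.2, (s.2.1, s.1)))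
      (by intro ⟨d, b, a⟩ ⟨d', b', a'⟩ h; simp_all [Prod.ext_iff])
  have E5 : entropy μ (fun ω => (z₁ ω, y ω)) = entropy μ (fun ω => (y ω, z₁ ω)) :=
    aux_entropy_comp μ (fun ω => (y ω, z₁ ω)) (fun s => (s.2, s.1))
      (fun s s' h => by simpa [Prod.ext_iff, and_comm] using h)
  have E6 : entropy μ (fun ω => (z₂ ω, y ω)) = entropy μ (fun ω => (y ω, z₂ ω)) :=
    aux_entropy_comp μ (fun ω => (y ω, z₂ ω)) (fun s => (s.2, s.1))
      (fun s s' h => by simpa [Prod.ext_iff, and_comm] using h)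
  have E7 : entropy μ (fun ω => (t ω, (y ω, x ω))) =
      entropy μ (fun ω => (y ω, (x ω, t ω))) :=
    aux_entropy_comp μ (fun ω => (y ω, (x ω, t ω)))
      (fun s => (s.2.2, (s.1, s.2.1)))
      (by intro ⟨b, a, tt⟩ ⟨b', a', tt'⟩ h; simp_all [Prod.ext_iff])
  have E8 : entropy μ (fun ω => (t ω, x ω)) = entropy μ (fun ω => (x ω, t ω)) :=
    aux_entropy_comp μ (fun ω => (x ω, t ω)) (fun s => (s.2, s.1))
      (fun s s' h => by simpa [Prod.ext_iff, and_comm] using h)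
  have hssa := aux_entropy_ssa μ t y x ht hy hx
  rw [E7, E8] at hssa
  rw [E1, E2] at hz₁suff
  rw [E3, E4] at hz₂suff
  linarith
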